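/- Let H = (V,E) be a finite hypergraph in which every hyperedge e ∈ E satisfies |e| ≤ L, and let x ∈ [0,1]^E satisfy Σ_{e ∋ v} x_e ≤ 1 for every vertex v ∈ V. Then there exists a probability distribution μ on the hypergraph matchings of H (sets of pairwise vertex-disjoint hyperedges) such that: (i) P_{S∼μ}[e ∈ S] = x_e/(L+1) for every hyperedge e ∈ E, and (ii) for every e ∈ E and every hypergraph matching T with e ∉ T and P_{S∼μ}[S∖{e} = T] > 0, we have P_{S∼μ}[e ∈ S | S∖{e} = T] ≤ x_e. In particular, there is a 1/(L+1)-selectable stationary online contention resolution scheme for rank-L hypergraph matchings. -/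

import Mathlib

open Finset

/-- `S` is a hypergraph matching: the hyperedges in `S` are pairwise vertex-disjoint. -/
def IsHypMatching {V E : Type*} [DecidableEq V] (ends : E → Finset V) (S : Finset E) : Prop :=
  ∀ e ∈ S, ∀ f ∈ S, e ≠ f → Disjoint (ends e) (ends f)

set_option linter.unusedSectionVars false

section Aux

variable {V E : Type*} [Fintype V] [Fintype E] [DecidableEq V] [DecidableEq E]

lemma hypmatching_subset {ends : E → Finset V} {S T : Finset E}
    (h : IsHypMatching ends S) (hTS : T ⊆ S) : IsHypMatching ends T :=
  fun e he f hf hef => h e (hTS he) f (hTS hf) hef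

lemma hypmatching_empty (ends : E → Finset V) : IsHypMatching ends (∅ : Finset E) := by
  intro e he; simp at he

lemma hypmatching_singleton (ends : E → Finset V) (e : E) :
    IsHypMatching ends ({e} : Finset E) := by
  intro a ha b hb hab
  simp only [mem_singleton] at ha hb
  exact absurd (ha.trans hb.symm) hab

lemma hypmatching_insert {ends : E → Finset V} {T : Finset E} {e : E}
    (h : IsHypMatching ends T)
    (hd : ∀ f ∈ T, Disjoint (ends f) (ends e)) : IsHypMatching ends (insert e T) := by
  intro a ha b hb hab
  rcases mem_insert.1 ha with rfl | ha'
  · rcases mem_insert.1 hb with rfl | hb'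
    · exact absurd rfl hab
    · exact (hd b hb').symm
  · rcases mem_insert.1 hb with rfl | hb'
    · exact hd a ha'
    · exact h a ha' b hb' hab

/-- The set of admissible matchings: matchings supported on edges of positive weight. -/
noncomputable def MS (ends : E → Finset V) (x : E → ℝ) : Finset (Finset E) :=
  univ.filter (fun S => (∀ e ∈ S, ∀ f ∈ S, e ≠ f → Disjoint (ends e) (ends f)) ∧ ∀ f ∈ S, 0 < x f)

lemma mem_MS {ends : E → Finset V} {x : E → ℝ} {S : Finset E} :
    S ∈ MS ends x ↔ IsHypMatching ends S ∧ ∀ f ∈ S, 0 < x f := by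
  simp [MS, IsHypMatching]

lemma empty_mem_MS (ends : E → Finset V) (x : E → ℝ) : (∅ : Finset E) ∈ MS ends x :=
  mem_MS.2 ⟨hypmatching_empty ends, by simp⟩

lemma singleton_mem_MS {ends : E → Finset V} {x : E → ℝ} {e : E} (he : 0 < x e) :
    ({e} : Finset E) ∈ MS ends x :=
  mem_MS.2 ⟨hypmatching_singleton ends e, by simpa using he⟩

noncomputable def wt (θ : E → ℝ) (S : Finset E) : ℝ := Real.exp (∑ f ∈ S, θ f)

lemma wt_pos (θ : E → ℝ) (S : Finset E) : 0 < wt θ S := Real.exp_pos _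

noncomputable def Zp (ends : E → Finset V) (x : E → ℝ) (θ : E → ℝ) : ℝ :=
  ∑ S ∈ MS ends x, wt θ S

lemma Zp_pos (ends : E → Finset V) (x : E → ℝ) (θ : E → ℝ) : 0 < Zp ends x θ :=
  Finset.sum_pos (fun S _ => wt_pos θ S) ⟨∅, empty_mem_MS ends x⟩

lemma wt_le_Zp {ends : E → Finset V} {x : E → ℝ} (θ : E → ℝ) {S : Finset E}
    (hS : S ∈ MS ends x) : wt θ S ≤ Zp ends x θ :=
  Finset.single_le_sum (fun T _ => (wt_pos θ T).le) hS

lemma sum_le_log_Zp {ends : E → Finset V} {x : E → ℝ} (θ : E → ℝ) {S : Finset E}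
    (hS : S ∈ MS ends x) : ∑ f ∈ S, θ f ≤ Real.log (Zp ends x θ) := by
  have h1 : wt θ S ≤ Zp ends x θ := wt_le_Zp θ hS
  have := Real.log_le_log (wt_pos θ S) h1
  rwa [wt, Real.log_exp] at this

lemma Zp_continuous (ends : E → Finset V) (x : E → ℝ) :
    Continuous (Zp ends x) := by
  apply continuous_finset_sum
  intro S _
  exact Real.continuous_exp.comp (continuous_finset_sum _ (fun f _ => continuous_apply f))


/-- Degree bound: the total weight of edges conflicting with `e` is at most `card(ends e) * (1 - x e)`. -/
lemma degree_bound {ends : E → Finset V} {x : E → ℝ} (L : ℕ)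
    (hrank : ∀ e, (ends e).card ≤ L)
    (hx : ∀ e, 0 ≤ x e ∧ x e ≤ 1)
    (hdeg : ∀ v : V, ∑ e ∈ univ.filter (fun e => v ∈ ends e), x e ≤ 1)
    (e : E) :
    ∑ f ∈ univ.filter (fun f => f ≠ e ∧ ((ends f) ∩ (ends e)).Nonempty), x f
      ≤ (L : ℝ) * (1 - x e) := by
  set N := univ.filter (fun f => f ≠ e ∧ ((ends f) ∩ (ends e)).Nonempty) with hN
  have step1 : ∑ f ∈ N, x f ≤ ∑ f ∈ N, ∑ v ∈ ends e, (if v ∈ ends f then x f else 0) := by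
    apply Finset.sum_le_sum
    intro f hf
    rcases (mem_filter.1 hf).2 with ⟨hfe, ⟨v, hv⟩⟩
    rcases Finset.mem_inter.1 hv with ⟨hv1, hv2⟩
    have h2 : (if v ∈ ends f then x f else 0) ≤ ∑ v ∈ ends e, (if v ∈ ends f then x f else 0) := by
      apply Finset.single_le_sum (f := fun v => if v ∈ ends f then x f else 0) _ hv2
      intro u _
      by_cases h : u ∈ ends f <;> simp [h, (hx f).1]
    simpa [hv1] using h2
  have step2 : ∑ f ∈ N, ∑ v ∈ ends e, (if v ∈ ends f then x f else 0)
      = ∑ v ∈ ends e, ∑ f ∈ N, (if v ∈ ends f then x f else 0) := Finset.sum_comm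
  have step3 : ∀ v ∈ ends e, ∑ f ∈ N, (if v ∈ ends f then x f else 0) ≤ 1 - x e := by
    intro v hv
    have sub : ∑ f ∈ N, (if v ∈ ends f then x f else 0)
        ≤ ∑ f ∈ univ.erase e, (if v ∈ ends f then x f else 0) := by
      apply Finset.sum_le_sum_of_subset_of_nonneg
      · intro f hf
        exact Finset.mem_erase.2 ⟨(mem_filter.1 hf).2.1, mem_univ f⟩
      · intro f _ _
        by_cases h : v ∈ ends f <;> simp [h, (hx f).1]
    have he' : ∑ f ∈ univ.erase e, (if v ∈ ends f then x f else 0)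
        = (∑ f ∈ univ, (if v ∈ ends f then x f else 0)) - x e := by
      rw [← Finset.add_sum_erase _ _ (mem_univ e)]
      simp [hv]
    have hfull : ∑ f ∈ univ, (if v ∈ ends f then x f else 0) ≤ 1 := by
      rw [← Finset.sum_filter]
      convert hdeg v using 2
    calc ∑ f ∈ N, (if v ∈ ends f then x f else 0)
        ≤ ∑ f ∈ univ.erase e, (if v ∈ ends f then x f else 0) := sub
      _ = (∑ f ∈ univ, (if v ∈ ends f then x f else 0)) - x e := he'
      _ ≤ 1 - x e := by linarith
  calc ∑ f ∈ N, x f ≤ ∑ v ∈ ends e, ∑ f ∈ N, (if v ∈ ends f then x f else 0) := by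
        rw [← step2]; exact step1
    _ ≤ ∑ v ∈ ends e, (1 - x e) := Finset.sum_le_sum step3
    _ = ((ends e).card : ℝ) * (1 - x e) := by rw [Finset.sum_const, nsmul_eq_mul]
    _ ≤ (L : ℝ) * (1 - x e) := by
        apply mul_le_mul_of_nonneg_right _ (by linarith [(hx e).2])
        exact_mod_cast hrank e

/-- Greedy matching lemma: the weighted sum over a positively-weighted set is at most
`L` times the `g`-value of some matching inside it. -/
lemma greedy_bound {ends : E → Finset V} {x : E → ℝ} (L : ℕ) (hL : 1 ≤ L)
    (hrank : ∀ e, (ends e).card ≤ L)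
    (hx : ∀ e, 0 ≤ x e ∧ x e ≤ 1)
    (hdeg : ∀ v : V, ∑ e ∈ univ.filter (fun e => v ∈ ends e), x e ≤ 1)
    (g : E → ℝ) :
    ∀ F : Finset E, (∀ f ∈ F, 0 < x f) → (∀ f ∈ F, 0 ≤ g f) →
      ∃ S, S ∈ MS ends x ∧ S ⊆ F ∧ ∑ f ∈ F, x f * g f ≤ (L : ℝ) * ∑ e ∈ S, g e := by
  intro F
  induction F using Finset.strongInduction with
  | _ F ih =>
    intro hFpos hFg
    rcases F.eq_empty_or_nonempty with rfl | hFne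
    · exact ⟨∅, empty_mem_MS ends x, Finset.Subset.refl _, by simp⟩
    · obtain ⟨estar, hestar, hmax⟩ := Finset.exists_max_image F g hFne
      set p : E → Prop := fun f => f ≠ estar ∧ ¬((ends f) ∩ (ends estar)).Nonempty with hp
      set F' : Finset E := F.filter p with hF'
      have hF'ss : F' ⊂ F := by
        apply Finset.filter_ssubset.2
        exact ⟨estar, hestar, by simp [p]⟩
      obtain ⟨S', hS'MS, hS'F', hS'bound⟩ :=
        ih F' hF'ss (fun f hf => hFpos f (Finset.filter_subset _ _ hf))
          (fun f hf => hFg f (Finset.filter_subset _ _ hf))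
      have hestarS' : estar ∉ S' := by
        intro h
        have := hS'F' h
        rw [hF'] at this
        exact ((Finset.mem_filter.1 this).2).1 rfl
      refine ⟨insert estar S', ?_, ?_, ?_⟩
      · rw [mem_MS]
        constructor
        · apply hypmatching_insert (mem_MS.1 hS'MS).1
          intro f hf
          have hf' := hS'F' hf
          rw [hF', Finset.mem_filter] at hf'
          rw [Finset.disjoint_iff_inter_eq_empty]
          exact Finset.not_nonempty_iff_eq_empty.1 hf'.2.2
        · intro f hf
          rcases Finset.mem_insert.1 hf with rfl | hf'
          · exact hFpos f hestar
          · exact (mem_MS.1 hS'MS).2 f hf'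
      · intro f hf
        rcases Finset.mem_insert.1 hf with rfl | hf'
        · exact hestar
        · exact Finset.filter_subset _ _ (hS'F' hf')
      · have hsplit : ∑ f ∈ F, x f * g f
            = ∑ f ∈ F.filter p, x f * g f + ∑ f ∈ F.filter (fun f => ¬ p f), x f * g f :=
          (Finset.sum_filter_add_sum_filter_not F p _).symm
        have hgpos : 0 ≤ g estar := hFg estar hestar
        have hbad : ∑ f ∈ F.filter (fun f => ¬ p f), x f * g f ≤ (L : ℝ) * g estar := by
          have h1 : ∑ f ∈ F.filter (fun f => ¬ p f), x f * g f
              ≤ ∑ f ∈ F.filter (fun f => ¬ p f), x f * g estar := by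
            apply Finset.sum_le_sum
            intro f hf
            exact mul_le_mul_of_nonneg_left (hmax f (Finset.filter_subset _ _ hf))
              (hx f).1
          have h2 : ∑ f ∈ F.filter (fun f => ¬ p f), x f
              ≤ x estar + ∑ f ∈ univ.filter (fun f => f ≠ estar ∧ ((ends f) ∩ (ends estar)).Nonempty), x f := by
            have hsub : F.filter (fun f => ¬ p f)
                ⊆ insert estar (univ.filter (fun f => f ≠ estar ∧ ((ends f) ∩ (ends estar)).Nonempty)) := by
              intro f hf
              have hf2 : ¬ (f ≠ estar ∧ ¬((ends f) ∩ (ends estar)).Nonempty) :=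
                (Finset.mem_filter.1 hf).2
              push_neg at hf2
              by_cases hfe : f = estar
              · exact Finset.mem_insert.2 (Or.inl hfe)
              · exact Finset.mem_insert.2 (Or.inr (Finset.mem_filter.2 ⟨mem_univ f, hfe, hf2 hfe⟩))
            have hnn : ∀ f ∈ insert estar (univ.filter (fun f => f ≠ estar ∧ ((ends f) ∩ (ends estar)).Nonempty)),
                f ∉ F.filter (fun f => ¬ p f) → 0 ≤ x f := fun f _ _ => (hx f).1
            calc ∑ f ∈ F.filter (fun f => ¬ p f), x f
                ≤ ∑ f ∈ insert estar (univ.filter (fun f => f ≠ estar ∧ ((ends f) ∩ (ends estar)).Nonempty)), x f :=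
                  Finset.sum_le_sum_of_subset_of_nonneg hsub hnn
              _ = x estar + ∑ f ∈ univ.filter (fun f => f ≠ estar ∧ ((ends f) ∩ (ends estar)).Nonempty), x f := by
                  rw [Finset.sum_insert (by simp)]
          have h3 : x estar + ∑ f ∈ univ.filter (fun f => f ≠ estar ∧ ((ends f) ∩ (ends estar)).Nonempty), x f
              ≤ (L : ℝ) := by
            have := degree_bound L hrank hx hdeg estar
            have hL1 : (1 : ℝ) ≤ (L : ℝ) := by exact_mod_cast hL
            nlinarith [(hx estar).1, (hx estar).2]
          calc ∑ f ∈ F.filter (fun f => ¬ p f), x f * g f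
              ≤ ∑ f ∈ F.filter (fun f => ¬ p f), x f * g estar := h1
            _ = (∑ f ∈ F.filter (fun f => ¬ p f), x f) * g estar := by
                rw [Finset.sum_mul]
            _ ≤ (L : ℝ) * g estar := by
                apply mul_le_mul_of_nonneg_right _ hgpos
                exact le_trans h2 h3
        rw [hsplit, Finset.sum_insert hestarS', mul_add]
        have := hS'bound
        linarith
noncomputable def Phi (ends : E → Finset V) (x : E → ℝ) (L : ℕ) (θ : E → ℝ) : ℝ :=
  (∑ e ∈ univ.filter (fun e => 0 < x e), (x e / ((L : ℝ) + 1)) * θ e) - Real.log (Zp ends x θ)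

lemma Phi_coercive {ends : E → Finset V} {x : E → ℝ} (L : ℕ) (hL : 1 ≤ L)
    (hrank : ∀ e, (ends e).card ≤ L)
    (hx : ∀ e, 0 ≤ x e ∧ x e ≤ 1)
    (hdeg : ∀ v : V, ∑ e ∈ univ.filter (fun e => v ∈ ends e), x e ≤ 1)
    (ε : ℝ) (hε0 : 0 ≤ ε) (hε1 : ε ≤ 1 / ((L : ℝ) + 1))
    (hε2 : ∀ f, 0 < x f → ε ≤ x f / ((L : ℝ) + 1))
    (θ : E → ℝ) (e : E) (he : 0 < x e) :
    Phi ends x L θ ≤ -ε * |θ e| := by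
  have hL1 : (0 : ℝ) < (L : ℝ) + 1 := by positivity
  set Ep : Finset E := univ.filter (fun f => 0 < x f) with hEp
  set F : Finset E := Ep.filter (fun f => 0 < θ f) with hF
  obtain ⟨S, hSMS, hSF, hgb⟩ := greedy_bound L hL hrank hx hdeg θ F
    (fun f hf => (Finset.mem_filter.1 (Finset.filter_subset _ _ hf)).2)
    (fun f hf => le_of_lt (Finset.mem_filter.1 hf).2)
  set W : ℝ := ∑ f ∈ S, θ f with hW
  have hWlog : W ≤ Real.log (Zp ends x θ) := sum_le_log_Zp θ hSMS
  have hlog0 : (0 : ℝ) ≤ Real.log (Zp ends x θ) := by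
    have := sum_le_log_Zp θ (empty_mem_MS ends x)
    simpa using this
  have hloge : θ e ≤ Real.log (Zp ends x θ) := by
    have := sum_le_log_Zp θ (singleton_mem_MS (x := x) (ends := ends) he)
    simpa using this
  have hsplit : ∑ f ∈ Ep, (x f / ((L : ℝ) + 1)) * θ f
      = ∑ f ∈ F, (x f / ((L : ℝ) + 1)) * θ f
        + ∑ f ∈ Ep.filter (fun f => ¬ 0 < θ f), (x f / ((L : ℝ) + 1)) * θ f := by
    rw [hF]
    exact (Finset.sum_filter_add_sum_filter_not Ep _ _).symm
  have hFbound : ∑ f ∈ F, (x f / ((L : ℝ) + 1)) * θ f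
      ≤ ((L : ℝ) / ((L : ℝ) + 1)) * Real.log (Zp ends x θ) := by
    have h1 : ∑ f ∈ F, (x f / ((L : ℝ) + 1)) * θ f
        = (∑ f ∈ F, x f * θ f) / ((L : ℝ) + 1) := by
      rw [Finset.sum_div]
      apply Finset.sum_congr rfl
      intro f _
      ring
    rw [h1]
    have h2 : (∑ f ∈ F, x f * θ f) ≤ (L : ℝ) * Real.log (Zp ends x θ) := by
      refine le_trans hgb ?_
      apply mul_le_mul_of_nonneg_left hWlog (by positivity)
    rw [div_le_iff₀ hL1]
    have hexp : ((L : ℝ) / ((L : ℝ) + 1)) * Real.log (Zp ends x θ) * ((L : ℝ) + 1)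
        = (L : ℝ) * Real.log (Zp ends x θ) := by
      field_simp
    linarith
  have hnegpart : ∑ f ∈ Ep.filter (fun f => ¬ 0 < θ f), (x f / ((L : ℝ) + 1)) * θ f ≤ 0 := by
    apply Finset.sum_nonpos
    intro f hf
    have h1 : ¬ 0 < θ f := (Finset.mem_filter.1 hf).2
    have h2 : 0 < x f := (Finset.mem_filter.1 (Finset.filter_subset _ _ hf)).2
    apply mul_nonpos_of_nonneg_of_nonpos (div_nonneg h2.le hL1.le) (le_of_not_gt h1)
  rcases le_or_gt 0 (θ e) with hθe | hθe
  · -- θ e ≥ 0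
    have habs : |θ e| = θ e := abs_of_nonneg hθe
    have : Phi ends x L θ ≤ ((L : ℝ) / ((L : ℝ) + 1)) * Real.log (Zp ends x θ)
        - Real.log (Zp ends x θ) := by
      rw [Phi]
      have := hsplit
      linarith
    have h3 : ((L : ℝ) / ((L : ℝ) + 1)) * Real.log (Zp ends x θ) - Real.log (Zp ends x θ)
        = -(1 / ((L : ℝ) + 1)) * Real.log (Zp ends x θ) := by
      field_simp
      ring
    rw [habs]
    have h4 : -(1 / ((L : ℝ) + 1)) * Real.log (Zp ends x θ) ≤ -(1 / ((L : ℝ) + 1)) * θ e := by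
      apply mul_le_mul_of_nonpos_left hloge
      simp only [neg_nonpos]
      positivity
    have h5 : -(1 / ((L : ℝ) + 1)) * θ e ≤ -ε * θ e := by
      apply mul_le_mul_of_nonneg_right _ hθe
      linarith
    linarith
  · -- θ e < 0
    have habs : |θ e| = -θ e := abs_of_neg hθe
    have hmem : e ∈ Ep.filter (fun f => ¬ 0 < θ f) := by
      rw [Finset.mem_filter]
      exact ⟨Finset.mem_filter.2 ⟨mem_univ e, he⟩, not_lt.2 hθe.le⟩
    have hsingle : ∑ f ∈ Ep.filter (fun f => ¬ 0 < θ f), (x f / ((L : ℝ) + 1)) * θ f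
        ≤ (x e / ((L : ℝ) + 1)) * θ e := by
      rw [← Finset.add_sum_erase _ _ hmem]
      have : ∑ f ∈ (Ep.filter (fun f => ¬ 0 < θ f)).erase e, (x f / ((L : ℝ) + 1)) * θ f ≤ 0 := by
        apply Finset.sum_nonpos
        intro f hf
        have h1 : ¬ 0 < θ f := (Finset.mem_filter.1 (Finset.mem_of_mem_erase hf)).2
        apply mul_nonpos_of_nonneg_of_nonpos (div_nonneg (hx f).1 hL1.le) (le_of_not_gt h1)
      linarith
    have hce : (x e / ((L : ℝ) + 1)) * θ e ≤ ε * θ e := by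
      apply mul_le_mul_of_nonpos_right (hε2 e he) hθe.le
    have : Phi ends x L θ ≤ ε * θ e := by
      rw [Phi]
      have hlogZ : -Real.log (Zp ends x θ) ≤ 0 := by linarith
      have hFb' : ∑ f ∈ F, (x f / ((L : ℝ) + 1)) * θ f ≤ ((L : ℝ) / ((L : ℝ) + 1)) * Real.log (Zp ends x θ) := hFbound
      have hq : ((L : ℝ) / ((L : ℝ) + 1)) * Real.log (Zp ends x θ) ≤ Real.log (Zp ends x θ) := by
        apply mul_le_of_le_one_left hlog0
        rw [div_le_one hL1]
        linarith
      linarith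
    rw [habs]
    linarith
lemma phi_continuous (ends : E → Finset V) (x : E → ℝ) (L : ℕ) :
    Continuous (Phi ends x L) := by
  apply Continuous.sub
  · apply continuous_finset_sum
    intro e _
    exact (continuous_const.mul (continuous_apply e))
  · rw [continuous_iff_continuousAt]
    intro θ
    exact (Real.continuousAt_log (ne_of_gt (Zp_pos ends x θ))).comp
      (Zp_continuous ends x).continuousAt

/-- Existence of a Gibbs measure (product-form measure on matchings) with the
prescribed marginals `x e / (L+1)`. -/
lemma exists_gibbs {ends : E → Finset V} {x : E → ℝ} (L : ℕ) (hL : 1 ≤ L)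
    (hrank : ∀ e, (ends e).card ≤ L)
    (hx : ∀ e, 0 ≤ x e ∧ x e ≤ 1)
    (hdeg : ∀ v : V, ∑ e ∈ univ.filter (fun e => v ∈ ends e), x e ≤ 1)
    (hEp : ∃ e, 0 < x e) :
    ∃ θ : E → ℝ, ∀ e, 0 < x e →
      ∑ S ∈ (MS ends x).filter (fun S => e ∈ S), wt θ S
        = (x e / ((L : ℝ) + 1)) * Zp ends x θ := by
  have hL1 : (0 : ℝ) < (L : ℝ) + 1 := by positivity
  set Ep : Finset E := univ.filter (fun f => 0 < x f) with hEpdef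
  have hEpne : Ep.Nonempty := by
    obtain ⟨e, he⟩ := hEp
    exact ⟨e, Finset.mem_filter.2 ⟨mem_univ e, he⟩⟩
  set img : Finset ℝ := Ep.image (fun f => x f / ((L : ℝ) + 1)) with himg
  have himgne : img.Nonempty := hEpne.image _
  set ε : ℝ := min (1 / ((L : ℝ) + 1)) (img.min' himgne) with hεdef
  have hε0 : 0 < ε := by
    apply lt_min (by positivity)
    obtain ⟨f, hf, hfeq⟩ := Finset.mem_image.1 (img.min'_mem himgne)
    rw [← hfeq]
    have := (Finset.mem_filter.1 hf).2
    positivity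
  have hε1 : ε ≤ 1 / ((L : ℝ) + 1) := min_le_left _ _
  have hε2 : ∀ f, 0 < x f → ε ≤ x f / ((L : ℝ) + 1) := by
    intro f hf
    refine le_trans (min_le_right _ _) ?_
    apply Finset.min'_le
    exact Finset.mem_image.2 ⟨f, Finset.mem_filter.2 ⟨mem_univ f, hf⟩, rfl⟩
  have hcard1 : (1 : ℝ) ≤ ((MS ends x).card : ℝ) := by
    have : 0 < (MS ends x).card := Finset.card_pos.2 ⟨∅, empty_mem_MS ends x⟩
    exact_mod_cast this
  set R : ℝ := (Real.log ((MS ends x).card) + 1) / ε with hRdef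
  have hlogcard : (0 : ℝ) ≤ Real.log ((MS ends x).card) := Real.log_nonneg hcard1
  have hR0 : 0 < R := by
    apply div_pos (by linarith) hε0
  have hPhi0 : Phi ends x L 0 = - Real.log ((MS ends x).card) := by
    rw [Phi]
    have h1 : Zp ends x 0 = ((MS ends x).card : ℝ) := by
      rw [Zp]
      have hw : ∀ S ∈ MS ends x, wt (0 : E → ℝ) S = 1 := fun S _ => by simp [wt]
      rw [Finset.sum_congr rfl hw, Finset.sum_const, nsmul_eq_mul, mul_one]
    rw [h1]
    simp
  -- the compact box
  set lo : E → ℝ := fun f => if 0 < x f then -R else 0 with hlo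
  set hi : E → ℝ := fun f => if 0 < x f then R else 0 with hhi
  set box : Set (E → ℝ) := Set.univ.pi (fun f => Set.Icc (lo f) (hi f)) with hbox
  have hboxcompact : IsCompact box := isCompact_univ_pi (fun f => isCompact_Icc)
  have h0box : (0 : E → ℝ) ∈ box := by
    intro f _
    by_cases h : 0 < x f <;> simp [hlo, hhi, h, hR0.le]
  obtain ⟨θs, hθsbox, hθsmax⟩ := hboxcompact.exists_isMaxOn ⟨0, h0box⟩
    (phi_continuous ends x L).continuousOn
  have hθmem : ∀ f, θs f ∈ Set.Icc (lo f) (hi f) := fun f => hθsbox f (Set.mem_univ f)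
  have hθ0 : ∀ f, ¬ 0 < x f → θs f = 0 := by
    intro f hf
    have h := hθmem f
    simp only [hlo, hhi, hf, if_false] at h
    rw [Set.mem_Icc] at h
    linarith [h.1, h.2]
  have hPhis : - Real.log ((MS ends x).card) ≤ Phi ends x L θs := by
    rw [← hPhi0]
    exact hθsmax h0box
  -- strict interiority
  have hstrict : ∀ e, 0 < x e → |θs e| < R := by
    intro e he
    by_contra hcon
    push_neg at hcon
    have hub : |θs e| ≤ R := by
      have := hθmem e
      simp [hlo, hhi, he] at this
      rw [abs_le]
      exact this
    have heq : |θs e| = R := le_antisymm hub hcon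
    have := Phi_coercive L hL hrank hx hdeg ε hε0.le hε1 hε2 θs e he
    rw [heq] at this
    have hRe : -ε * R = -(Real.log ((MS ends x).card) + 1) := by
      rw [hRdef]
      field_simp
    rw [hRe] at this
    linarith
  -- gradient condition
  refine ⟨θs, ?_⟩
  intro e he
  set A : ℝ := ∑ S ∈ (MS ends x).filter (fun S => e ∉ S), wt θs S with hA
  set B : ℝ := ∑ S ∈ (MS ends x).filter (fun S => e ∈ S), wt θs S with hB
  have hApos : 0 ≤ A := Finset.sum_nonneg (fun S _ => (wt_pos θs S).le)
  have hBpos : 0 < B := by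
    apply Finset.sum_pos (fun S _ => wt_pos θs S)
    exact ⟨{e}, Finset.mem_filter.2 ⟨singleton_mem_MS he, by simp⟩⟩
  have hZsplit : ∀ t : ℝ, Zp ends x (Function.update θs e (θs e + t)) = A + B * Real.exp t := by
    intro t
    rw [Zp, ← Finset.sum_filter_add_sum_filter_not (MS ends x) (fun S => e ∈ S)]
    have h1 : ∑ S ∈ (MS ends x).filter (fun S => e ∈ S), wt (Function.update θs e (θs e + t)) S
        = B * Real.exp t := by
      rw [hB, Finset.sum_mul]
      apply Finset.sum_congr rfl
      intro S hS
      have heS : e ∈ S := (Finset.mem_filter.1 hS).2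
      rw [wt, wt, ← Real.exp_add]
      congr 1
      rw [Finset.sum_update_of_mem heS, ← Finset.add_sum_erase _ θs heS, Finset.erase_eq]
      ring
    have h2 : ∑ S ∈ (MS ends x).filter (fun S => e ∉ S), wt (Function.update θs e (θs e + t)) S
        = A := by
      rw [hA]
      apply Finset.sum_congr rfl
      intro S hS
      have heS : e ∉ S := (Finset.mem_filter.1 hS).2
      rw [wt, wt]
      congr 1
      apply Finset.sum_congr rfl
      intro f hf
      rw [Function.update_of_ne (by rintro rfl; exact heS hf)]
    rw [h1, h2]
    ring
  set c : ℝ := x e / ((L : ℝ) + 1) with hc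
  have hLsplit : ∀ t : ℝ, (∑ f ∈ Ep, (x f / ((L : ℝ) + 1)) * (Function.update θs e (θs e + t)) f)
      = (∑ f ∈ Ep, (x f / ((L : ℝ) + 1)) * θs f) + c * t := by
    intro t
    have heEp : e ∈ Ep := Finset.mem_filter.2 ⟨mem_univ e, he⟩
    rw [← Finset.add_sum_erase _ _ heEp, ← Finset.add_sum_erase _ (fun f => (x f / ((L : ℝ) + 1)) * θs f) heEp]
    have h1 : ∑ f ∈ Ep.erase e, (x f / ((L : ℝ) + 1)) * (Function.update θs e (θs e + t)) f
        = ∑ f ∈ Ep.erase e, (x f / ((L : ℝ) + 1)) * θs f := by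
      apply Finset.sum_congr rfl
      intro f hf
      rw [Function.update_of_ne (Finset.ne_of_mem_erase hf)]
    rw [h1, Function.update_self]
    ring
  set ψ : ℝ → ℝ := fun t => ((∑ f ∈ Ep, (x f / ((L : ℝ) + 1)) * θs f) + c * t)
      - Real.log (A + B * Real.exp t) with hψ
  have hψeq : ∀ t : ℝ, Phi ends x L (Function.update θs e (θs e + t)) = ψ t := by
    intro t
    rw [Phi, hψ, hZsplit t, hLsplit t]
  have hψ0 : ψ 0 = Phi ends x L θs := by
    rw [← hψeq 0]
    congr 1
    rw [add_zero, Function.update_eq_self]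
  -- local max
  have hlocal : IsLocalMax ψ 0 := by
    have hδ : 0 < R - |θs e| := by linarith [hstrict e he]
    apply Filter.eventually_of_mem (Ioo_mem_nhds (by linarith : -(R - |θs e|) < 0) hδ)
    intro t ht
    rcases ht with ⟨ht1, ht2⟩
    have hmem : Function.update θs e (θs e + t) ∈ box := by
      intro f _
      by_cases hfe : f = e
      · subst hfe
        rw [Function.update_self]
        simp only [hlo, hhi, he, if_true]
        have h1 : |θs f + t| ≤ |θs f| + |t| := abs_add_le _ _
        have h2 : |t| < R - |θs f| := abs_lt.2 ⟨ht1, ht2⟩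
        constructor
        · nlinarith [neg_abs_le (θs f + t)]
        · nlinarith [le_abs_self (θs f + t)]
      · rw [Function.update_of_ne hfe]
        exact hθmem f
    rw [← hψeq t, hψ0]
    exact hθsmax hmem
  -- derivative
  have hABpos : 0 < A + B * Real.exp 0 := by
    rw [Real.exp_zero]
    nlinarith
  have hd1 : HasDerivAt (fun t : ℝ => A + B * Real.exp t) (B * Real.exp 0) 0 :=
    ((Real.hasDerivAt_exp 0).const_mul B).const_add A
  have hd2 : HasDerivAt (fun t : ℝ => Real.log (A + B * Real.exp t))
      (B * Real.exp 0 / (A + B * Real.exp 0)) 0 := hd1.log (ne_of_gt hABpos)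
  have hd3 : HasDerivAt (fun t : ℝ => (∑ f ∈ Ep, (x f / ((L : ℝ) + 1)) * θs f) + c * t) c 0 := by
    have := (hasDerivAt_id (0 : ℝ)).const_mul c
    simp only [mul_one] at this
    exact this.const_add _
  have hd4 : HasDerivAt ψ (c - B * Real.exp 0 / (A + B * Real.exp 0)) 0 := hd3.sub hd2
  have hzero := hlocal.hasDerivAt_eq_zero hd4
  rw [Real.exp_zero, mul_one] at hzero
  have hZeq : Zp ends x θs = A + B := by
    have := hZsplit 0
    rw [add_zero, Function.update_eq_self, Real.exp_zero, mul_one] at this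
    exact this
  have hfin : c = B / (A + B) := by linarith
  have hABne : A + B ≠ 0 := ne_of_gt (by linarith)
  rw [hZeq, hfin]
  field_simp

lemma key_bound {ends : E → Finset V} {x : E → ℝ} (L : ℕ) (hL : 1 ≤ L)
    (hrank : ∀ e, (ends e).card ≤ L)
    (hx : ∀ e, 0 ≤ x e ∧ x e ≤ 1)
    (hdeg : ∀ v : V, ∑ e ∈ univ.filter (fun e => v ∈ ends e), x e ≤ 1)
    (θ : E → ℝ)
    (hgrad : ∀ e, 0 < x e →
      ∑ S ∈ (MS ends x).filter (fun S => e ∈ S), wt θ S = (x e / ((L : ℝ) + 1)) * Zp ends x θ)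
    (e : E) (he : 0 < x e) :
    Real.exp (θ e) * (1 - x e) ≤ x e := by
  have hL1 : (0 : ℝ) < (L : ℝ) + 1 := by positivity
  have hLc : (1 : ℝ) ≤ (L : ℝ) := by exact_mod_cast hL
  set y : ℝ := Real.exp (θ e) with hy
  have hy0 : 0 < y := Real.exp_pos _
  set Z : ℝ := Zp ends x θ with hZdef
  have hZ0 : 0 < Z := Zp_pos ends x θ
  set Compat : Finset (Finset E) :=
    (MS ends x).filter (fun T => e ∉ T ∧ insert e T ∈ MS ends x) with hCompat
  set Q : ℝ := ∑ T ∈ Compat, wt θ T with hQ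
  -- step 1 : the marginal sum equals y * Q
  have step1 : ∑ S ∈ (MS ends x).filter (fun S => e ∈ S), wt θ S = y * Q := by
    rw [hQ, Finset.mul_sum]
    apply Finset.sum_nbij' (i := fun S => S.erase e) (j := fun T => insert e T)
    · intro S hS
      rcases Finset.mem_filter.1 hS with ⟨hSM, heS⟩
      rw [hCompat, Finset.mem_filter]
      refine ⟨?_, Finset.notMem_erase e S, ?_⟩
      · rcases mem_MS.1 hSM with ⟨hm, hp⟩
        exact mem_MS.2 ⟨hypmatching_subset hm (Finset.erase_subset e S),
          fun f hf => hp f (Finset.mem_of_mem_erase hf)⟩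
      · rw [Finset.insert_erase heS]
        exact hSM
    · intro T hT
      rcases Finset.mem_filter.1 hT with ⟨_, _, hins⟩
      exact Finset.mem_filter.2 ⟨hins, Finset.mem_insert_self e T⟩
    · intro S hS
      exact Finset.insert_erase (Finset.mem_filter.1 hS).2
    · intro T hT
      exact Finset.erase_insert (Finset.mem_filter.1 hT).2.1
    · intro S hS
      have heS : e ∈ S := (Finset.mem_filter.1 hS).2
      rw [wt, wt, ← Finset.add_sum_erase _ θ heS, Real.exp_add]
  -- step 2 : union bound
  have step2 : Z - Q ≤ ((x e + (L : ℝ) * (1 - x e)) / ((L : ℝ) + 1)) * Z := by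
    have hsub : Compat ⊆ MS ends x := Finset.filter_subset _ _
    have hdiff : ∑ S ∈ (MS ends x) \ Compat, wt θ S = Z - Q := by
      rw [hQ, hZdef, Zp]
      exact Finset.sum_sdiff_eq_sub hsub
    set Nb : Finset E := univ.filter (fun f => f = e ∨ ((ends f) ∩ (ends e)).Nonempty) with hNb
    have heNb : e ∈ Nb := Finset.mem_filter.2 ⟨mem_univ e, Or.inl rfl⟩
    have hwit : ∀ S ∈ (MS ends x) \ Compat, ∃ f ∈ Nb, f ∈ S := by
      intro S hS
      rcases Finset.mem_sdiff.1 hS with ⟨hSM, hSC⟩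
      by_contra hcon
      push_neg at hcon
      apply hSC
      rw [hCompat, Finset.mem_filter]
      have heS : e ∉ S := hcon e heNb
      refine ⟨hSM, heS, ?_⟩
      rcases mem_MS.1 hSM with ⟨hm, hp⟩
      refine mem_MS.2 ⟨?_, ?_⟩
      · apply hypmatching_insert hm
        intro f hf
        have hfNb : f ∉ Nb := fun hfn => hcon f hfn hf
        rw [hNb, Finset.mem_filter] at hfNb
        push_neg at hfNb
        have := hfNb (mem_univ f)
        rw [Finset.disjoint_iff_inter_eq_empty]
        exact this.2
      · intro f hf
        rcases Finset.mem_insert.1 hf with rfl | hf'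
        · exact he
        · exact hp f hf'
    have hb1 : ∑ S ∈ (MS ends x) \ Compat, wt θ S
        ≤ ∑ S ∈ (MS ends x) \ Compat, ∑ f ∈ Nb, (if f ∈ S then wt θ S else 0) := by
      apply Finset.sum_le_sum
      intro S hS
      obtain ⟨f, hfNb, hfS⟩ := hwit S hS
      have h2 : (if f ∈ S then wt θ S else 0) ≤ ∑ g ∈ Nb, (if g ∈ S then wt θ S else 0) := by
        apply Finset.single_le_sum (f := fun g => if g ∈ S then wt θ S else 0) _ hfNb
        intro g _
        by_cases h : g ∈ S <;> simp [h, (wt_pos θ S).le]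
      simpa [hfS] using h2
    have hb2 : ∑ S ∈ (MS ends x) \ Compat, ∑ f ∈ Nb, (if f ∈ S then wt θ S else 0)
        ≤ ∑ S ∈ MS ends x, ∑ f ∈ Nb, (if f ∈ S then wt θ S else 0) := by
      apply Finset.sum_le_sum_of_subset_of_nonneg (Finset.sdiff_subset)
      intro S _ _
      apply Finset.sum_nonneg
      intro f _
      by_cases h : f ∈ S <;> simp [h, (wt_pos θ S).le]
    have hb3 : ∑ S ∈ MS ends x, ∑ f ∈ Nb, (if f ∈ S then wt θ S else 0)
        = ∑ f ∈ Nb, ∑ S ∈ (MS ends x).filter (fun S => f ∈ S), wt θ S := by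
      rw [Finset.sum_comm]
      apply Finset.sum_congr rfl
      intro f _
      rw [Finset.sum_filter]
    have hb4 : ∀ f, ∑ S ∈ (MS ends x).filter (fun S => f ∈ S), wt θ S
        ≤ (x f / ((L : ℝ) + 1)) * Z := by
      intro f
      by_cases hf : 0 < x f
      · rw [hgrad f hf]
      · have h1 : ∑ S ∈ (MS ends x).filter (fun S => f ∈ S), wt θ S = 0 := by
          apply Finset.sum_eq_zero
          intro S hS
          rcases Finset.mem_filter.1 hS with ⟨hSM, hfS⟩
          exact absurd ((mem_MS.1 hSM).2 f hfS) hf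
        rw [h1]
        have : 0 ≤ x f := (hx f).1
        positivity
    have hb5 : ∑ f ∈ Nb, (x f / ((L : ℝ) + 1)) * Z
        ≤ ((x e + (L : ℝ) * (1 - x e)) / ((L : ℝ) + 1)) * Z := by
      have hsum : ∑ f ∈ Nb, x f ≤ x e + (L : ℝ) * (1 - x e) := by
        rw [← Finset.add_sum_erase _ x heNb]
        have herase : Nb.erase e = univ.filter (fun f => f ≠ e ∧ ((ends f) ∩ (ends e)).Nonempty) := by
          ext f
          simp only [Finset.mem_erase, hNb, Finset.mem_filter, mem_univ, true_and]
          constructor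
          · rintro ⟨hne, h | h⟩
            · exact absurd h hne
            · exact ⟨hne, h⟩
          · rintro ⟨hne, h⟩
            exact ⟨hne, Or.inr h⟩
        rw [herase]
        have := degree_bound L hrank hx hdeg e
        linarith
      have h6 : ∑ f ∈ Nb, (x f / ((L : ℝ) + 1)) * Z = (∑ f ∈ Nb, x f) * (Z / ((L : ℝ) + 1)) := by
        rw [Finset.sum_mul]
        apply Finset.sum_congr rfl
        intro f _
        ring
      rw [h6]
      have h7 : ((x e + (L : ℝ) * (1 - x e)) / ((L : ℝ) + 1)) * Z
          = (x e + (L : ℝ) * (1 - x e)) * (Z / ((L : ℝ) + 1)) := by ring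
      rw [h7]
      apply mul_le_mul_of_nonneg_right hsum
      positivity
    calc Z - Q = ∑ S ∈ (MS ends x) \ Compat, wt θ S := hdiff.symm
      _ ≤ ∑ S ∈ (MS ends x) \ Compat, ∑ f ∈ Nb, (if f ∈ S then wt θ S else 0) := hb1
      _ ≤ ∑ S ∈ MS ends x, ∑ f ∈ Nb, (if f ∈ S then wt θ S else 0) := hb2
      _ = ∑ f ∈ Nb, ∑ S ∈ (MS ends x).filter (fun S => f ∈ S), wt θ S := hb3
      _ ≤ ∑ f ∈ Nb, (x f / ((L : ℝ) + 1)) * Z := Finset.sum_le_sum (fun f _ => hb4 f)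
      _ ≤ ((x e + (L : ℝ) * (1 - x e)) / ((L : ℝ) + 1)) * Z := hb5
  -- combine
  have hgr : y * Q = (x e / ((L : ℝ) + 1)) * Z := by
    rw [← step1, hgrad e he]
  have hQlb : ((1 - x e) / ((L : ℝ) + 1)) * Z ≤ Q := by
    have hcoef : (x e + (L : ℝ) * (1 - x e)) / ((L : ℝ) + 1) + (1 - x e) / ((L : ℝ) + 1) ≤ 1 := by
      rw [← add_div, div_le_one hL1]
      nlinarith [(hx e).2, he.le]
    nlinarith [hZ0]
  have hfinal : y * (1 - x e) * (Z / ((L : ℝ) + 1)) ≤ x e * (Z / ((L : ℝ) + 1)) := by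
    have h1 : y * (((1 - x e) / ((L : ℝ) + 1)) * Z) ≤ y * Q :=
      mul_le_mul_of_nonneg_left hQlb hy0.le
    calc y * (1 - x e) * (Z / ((L : ℝ) + 1))
        = y * (((1 - x e) / ((L : ℝ) + 1)) * Z) := by ring
      _ ≤ y * Q := h1
      _ = (x e / ((L : ℝ) + 1)) * Z := hgr
      _ = x e * (Z / ((L : ℝ) + 1)) := by ring
  have hZL : 0 < Z / ((L : ℝ) + 1) := by positivity
  exact le_of_mul_le_mul_right hfinal hZL

lemma main_construction {ends : E → Finset V} {x : E → ℝ} (L : ℕ) (hL : 1 ≤ L)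
    (hrank : ∀ e, (ends e).card ≤ L)
    (hx : ∀ e, 0 ≤ x e ∧ x e ≤ 1)
    (hdeg : ∀ v : V, ∑ e ∈ univ.filter (fun e => v ∈ ends e), x e ≤ 1)
    (hEp : ∃ e, 0 < x e) :
    ∃ μ : Finset E → ℝ,
      (∀ S, 0 ≤ μ S) ∧
      (∑ S : Finset E, μ S) = 1 ∧
      (∀ S, μ S ≠ 0 → IsHypMatching ends S) ∧
      (∀ e, ∑ S ∈ univ.filter (fun S => e ∈ S), μ S = x e / ((L : ℝ) + 1)) ∧
      (∀ e : E, ∀ T : Finset E, IsHypMatching ends T → e ∉ T →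
        0 < μ T + μ (insert e T) →
        μ (insert e T) / (μ T + μ (insert e T)) ≤ x e) := by
  obtain ⟨θ, hgrad⟩ := exists_gibbs L hL hrank hx hdeg hEp
  set Z : ℝ := Zp ends x θ with hZdef
  have hZ0 : 0 < Z := Zp_pos ends x θ
  have hZne : Z ≠ 0 := ne_of_gt hZ0
  set μ : Finset E → ℝ := fun S => if S ∈ MS ends x then wt θ S / Z else 0 with hμ
  have hμnn : ∀ S, 0 ≤ μ S := by
    intro S
    rw [hμ]
    by_cases h : S ∈ MS ends x
    · simp only [h, if_true]
      exact (div_pos (wt_pos θ S) hZ0).le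
    · simp [h]
  refine ⟨μ, hμnn, ?_, ?_, ?_, ?_⟩
  · -- sums to 1
    have h1 : ∑ S : Finset E, μ S = ∑ S ∈ MS ends x, wt θ S / Z := by
      rw [hμ]
      rw [Finset.sum_ite_mem]
      rw [Finset.univ_inter]
    rw [h1, ← Finset.sum_div, ← Zp, ← hZdef, div_self hZne]
  · -- support
    intro S hS
    by_contra hcon
    apply hS
    rw [hμ]
    apply if_neg
    intro hm
    exact hcon (mem_MS.1 hm).1
  · -- marginals
    intro e
    rw [Finset.sum_filter]
    by_cases he : 0 < x e
    · have h1 : ∀ S : Finset E, (if e ∈ S then μ S else 0)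
          = (if S ∈ (MS ends x).filter (fun S => e ∈ S) then wt θ S / Z else 0) := by
        intro S
        rw [hμ]
        by_cases h2 : e ∈ S <;> by_cases h3 : S ∈ MS ends x <;>
          simp [h2, h3, Finset.mem_filter]
      rw [Finset.sum_congr rfl (fun S _ => h1 S), Finset.sum_ite_mem, Finset.univ_inter,
        ← Finset.sum_div, hgrad e he, mul_div_assoc, div_self hZne, mul_one]
    · have hxe : x e = 0 := le_antisymm (not_lt.1 he) (hx e).1
      have h1 : ∑ S : Finset E, (if e ∈ S then μ S else 0) = 0 := by
        apply Finset.sum_eq_zero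
        intro S _
        by_cases h2 : e ∈ S
        · simp only [h2, if_true]
          rw [hμ]
          apply if_neg
          intro hm
          exact he ((mem_MS.1 hm).2 e h2)
        · simp [h2]
      rw [h1, hxe, zero_div]
  · -- stationarity
    intro e T hT heT hpos
    by_cases hTM : T ∈ MS ends x
    · have hμT : μ T = wt θ T / Z := by rw [hμ]; exact if_pos hTM
      by_cases hIM : insert e T ∈ MS ends x
      · have hxe : 0 < x e := (mem_MS.1 hIM).2 e (Finset.mem_insert_self e T)
        set y : ℝ := Real.exp (θ e) with hy
        have hy0 : 0 < y := Real.exp_pos _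
        have hμins : μ (insert e T) = y * (wt θ T / Z) := by
          rw [hμ]
          simp only [hIM, if_true]
          rw [wt, Finset.sum_insert heT, Real.exp_add, ← wt, mul_div_assoc]
        have hkey : y * (1 - x e) ≤ x e := key_bound L hL hrank hx hdeg θ hgrad e hxe
        set u : ℝ := wt θ T / Z with hu
        have hu0 : 0 < u := div_pos (wt_pos θ T) hZ0
        rw [hμT, hμins]
        have hden : 0 < u + y * u := by nlinarith
        rw [div_le_iff₀ hden]
        nlinarith [mul_le_mul_of_nonneg_right hkey hu0.le]
      · have h0 : μ (insert e T) = 0 := by rw [hμ]; exact if_neg hIM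
        rw [h0, zero_div]
        exact (hx e).1
    · exfalso
      have h1 : μ T = 0 := by rw [hμ]; exact if_neg hTM
      have hbad : ∃ f ∈ T, ¬ 0 < x f := by
        by_contra hcon
        push_neg at hcon
        exact hTM (mem_MS.2 ⟨hT, hcon⟩)
      obtain ⟨f, hfT, hfx⟩ := hbad
      have h2 : μ (insert e T) = 0 := by
        rw [hμ]
        apply if_neg
        intro hm
        exact hfx ((mem_MS.1 hm).2 f (Finset.mem_insert_of_mem hfT))
      rw [h1, h2] at hpos
      simp at hpos

lemma trivial_construction {ends : E → Finset V} {x : E → ℝ} (L : ℕ)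
    (hxall : ∀ e, x e = 0) :
    ∃ μ : Finset E → ℝ,
      (∀ S, 0 ≤ μ S) ∧
      (∑ S : Finset E, μ S) = 1 ∧
      (∀ S, μ S ≠ 0 → IsHypMatching ends S) ∧
      (∀ e, ∑ S ∈ univ.filter (fun S => e ∈ S), μ S = x e / ((L : ℝ) + 1)) ∧
      (∀ e : E, ∀ T : Finset E, IsHypMatching ends T → e ∉ T →
        0 < μ T + μ (insert e T) →
        μ (insert e T) / (μ T + μ (insert e T)) ≤ x e) := by
  classical
  set ν : Finset E → ℝ := fun S => if S = (∅ : Finset E) then (1 : ℝ) else 0 with hν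
  refine ⟨ν, ?_, ?_, ?_, ?_, ?_⟩
  · intro S
    by_cases h : S = ∅ <;> simp [hν, h]
  · simp [hν]
  · intro S hS
    by_cases h : S = ∅
    · subst h; exact hypmatching_empty ends
    · simp [hν, h] at hS
  · intro e
    have h1 : ∑ S ∈ univ.filter (fun S => e ∈ S), ν S = 0 := by
      apply Finset.sum_eq_zero
      intro S hS
      have h2 : S ≠ ∅ := Finset.ne_empty_of_mem (Finset.mem_filter.1 hS).2
      simp [hν, h2]
    rw [h1, hxall e, zero_div]
  · intro e T _ _ hpos
    have h1 : insert e T ≠ ∅ := Finset.insert_ne_empty e T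
    have h2 : ν (insert e T) = 0 := by simp [hν, h1]
    rw [h2, zero_div, hxall e]

lemma rank_zero_construction {ends : E → Finset V} {x : E → ℝ} (L : ℕ) (hL0 : L = 0)
    (hrank : ∀ e, (ends e).card ≤ L)
    (hx : ∀ e, 0 ≤ x e ∧ x e ≤ 1) :
    ∃ μ : Finset E → ℝ,
      (∀ S, 0 ≤ μ S) ∧
      (∑ S : Finset E, μ S) = 1 ∧
      (∀ S, μ S ≠ 0 → IsHypMatching ends S) ∧
      (∀ e, ∑ S ∈ univ.filter (fun S => e ∈ S), μ S = x e / ((L : ℝ) + 1)) ∧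
      (∀ e : E, ∀ T : Finset E, IsHypMatching ends T → e ∉ T →
        0 < μ T + μ (insert e T) →
        μ (insert e T) / (μ T + μ (insert e T)) ≤ x e) := by
  subst hL0
  have hends : ∀ e, ends e = ∅ := fun e => Finset.card_eq_zero.1 (Nat.le_zero.1 (hrank e))
  have hcast : ((0 : ℕ) : ℝ) + 1 = 1 := by norm_num
  set μ : Finset E → ℝ := fun S => (∏ f ∈ S, x f) * ∏ f ∈ univ \ S, (1 - x f) with hμ
  have hμnn : ∀ S, 0 ≤ μ S := by
    intro S
    rw [hμ]
    apply mul_nonneg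
    · exact Finset.prod_nonneg (fun f _ => (hx f).1)
    · exact Finset.prod_nonneg (fun f _ => by linarith [(hx f).2])
  have htotal : ∑ S : Finset E, μ S = 1 := by
    have h1 : ∑ S ∈ (univ : Finset E).powerset, μ S
        = ∏ f ∈ (univ : Finset E), (x f + (1 - x f)) := by
      rw [Finset.prod_add]
    have h2 : ∏ f ∈ (univ : Finset E), (x f + (1 - x f)) = 1 := by
      apply Finset.prod_eq_one
      intro f _
      ring
    rw [← Finset.powerset_univ, h1, h2]
  have hmarg : ∀ e, ∑ S ∈ univ.filter (fun S => e ∉ S), μ S = 1 - x e := by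
    intro e
    have hset : univ.filter (fun S : Finset E => e ∉ S) = ((univ : Finset E).erase e).powerset := by
      ext S
      simp [Finset.mem_powerset, Finset.subset_erase]
    have hterm : ∀ S ∈ ((univ : Finset E).erase e).powerset,
        μ S = (1 - x e) * ((∏ f ∈ S, x f) * ∏ f ∈ ((univ : Finset E).erase e) \ S, (1 - x f)) := by
      intro S hS
      have hSe : e ∉ S := by
        intro h
        exact (Finset.mem_erase.1 ((Finset.mem_powerset.1 hS) h)).1 rfl
      have hUS : (univ : Finset E) \ S = insert e (((univ : Finset E).erase e) \ S) := by
        ext f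
        by_cases hfe : f = e
        · subst hfe
          simp [hSe]
        · simp [hfe, Finset.mem_erase]
      have hnotin : e ∉ ((univ : Finset E).erase e) \ S := by
        intro h
        exact (Finset.mem_erase.1 (Finset.mem_sdiff.1 h).1).1 rfl
      simp only [hμ]
      rw [hUS, Finset.prod_insert hnotin]
      ring
    rw [hset, Finset.sum_congr rfl hterm, ← Finset.mul_sum, ← Finset.prod_add]
    have : ∏ f ∈ (univ : Finset E).erase e, (x f + (1 - x f)) = 1 := by
      apply Finset.prod_eq_one
      intro f _
      ring
    rw [this, mul_one]
  refine ⟨μ, hμnn, htotal, ?_, ?_, ?_⟩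
  · intro S _
    intro a _ b _ _
    rw [hends a]
    exact Finset.disjoint_empty_left _
  · intro e
    have hsplit := Finset.sum_filter_add_sum_filter_not (univ : Finset (Finset E))
      (fun S => e ∈ S) μ
    have h2 : ∑ S ∈ univ.filter (fun S => ¬ e ∈ S), μ S = 1 - x e := hmarg e
    rw [hcast, div_one]
    have h3 : ∑ S ∈ univ.filter (fun S => e ∈ S), μ S
        + ∑ S ∈ univ.filter (fun S => ¬ e ∈ S), μ S = 1 := by
      rw [hsplit]
      exact htotal
    linarith
  · intro e T _ heT hpos
    set W : ℝ := (∏ f ∈ T, x f) * ∏ f ∈ univ \ insert e T, (1 - x f) with hW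
    have hUS : (univ : Finset E) \ T = insert e ((univ : Finset E) \ insert e T) := by
      ext f
      by_cases hfe : f = e
      · subst hfe
        simp [heT]
      · simp [hfe]
    have hnotin : e ∉ (univ : Finset E) \ insert e T := by
      simp
    have key1 : μ T = (1 - x e) * W := by
      simp only [hμ, hW]
      rw [hUS, Finset.prod_insert hnotin]
      ring
    have key2 : μ (insert e T) = x e * W := by
      simp only [hμ, hW]
      rw [Finset.prod_insert heT]
      ring
    have hWpos : 0 < W := by
      rw [key1, key2] at hpos
      nlinarith
    rw [key1, key2]
    have hden : (1 - x e) * W + x e * W = W := by ring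
    rw [hden, mul_div_assoc, div_self (ne_of_gt hWpos), mul_one]

end Aux

theorem stmt_2
    {V E : Type*} [Fintype V] [Fintype E] [DecidableEq V] [DecidableEq E]
    -- a finite hypergraph of rank at most L, with hyperedge set `E` and vertex map `ends`
    (L : ℕ) (ends : E → Finset V)
    (hrank : ∀ e, (ends e).card ≤ L)
    (x : E → ℝ) (hx : ∀ e, 0 ≤ x e ∧ x e ≤ 1)
    (hdeg : ∀ v : V, ∑ e ∈ univ.filter (fun e => v ∈ ends e), x e ≤ 1) :
    ∃ μ : Finset E → ℝ,
      (∀ S, 0 ≤ μ S) ∧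
      (∑ S : Finset E, μ S) = 1 ∧
      (∀ S, μ S ≠ 0 → IsHypMatching ends S) ∧
      -- (i) selectability with factor 1/(L+1)
      (∀ e, ∑ S ∈ univ.filter (fun S => e ∈ S), μ S = x e / ((L : ℝ) + 1)) ∧
      -- (ii) stationary implementability
      (∀ e : E, ∀ T : Finset E, IsHypMatching ends T → e ∉ T →
        0 < μ T + μ (insert e T) →
        μ (insert e T) / (μ T + μ (insert e T)) ≤ x e) := by
  by_cases hL0 : L = 0
  · exact rank_zero_construction L hL0 hrank hx
  · have hL : 1 ≤ L := Nat.one_le_iff_ne_zero.2 hL0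
    by_cases hEp : ∃ e, 0 < x e
    · exact main_construction L hL hrank hx hdeg hEp
    · push_neg at hEp
      have hxall : ∀ e, x e = 0 := fun e => le_antisymm (hEp e) (hx e).1
      exact trivial_construction L hxall
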